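/- Let τ = lσ be a nonempty finite sequence of distinct natural numbers with first letter l, and let k be a natural number not occurring in τ. If pix(kτ) = 0, then lec(kτ) = 1 + lec(kσ), where kτ and kσ denote the sequences τ and σ with k prepended. -/

import Mathlib

namespace PaperStats

/-- `des w` is the number of descents of the word `w` (0-indexed positions `i`
with `w(i) > w(i+1)`). -/
def des (w : List ℕ) : ℕ :=
  ((Finset.range (w.length - 1)).filter fun i => w.getD (i + 1) 0 < w.getD i 0).card

/-- `inv w` is the number of inversions of the word `w`: pairs of positions
`i < j` with `w(i) > w(j)`. -/
def inv (w : List ℕ) : ℕ :=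
  ((Finset.range w.length ×ˢ Finset.range w.length).filter
    fun p => p.1 < p.2 ∧ w.getD p.2 0 < w.getD p.1 0).card

/-- An inversion `(i,j)` of `w` is admissible if either `w(j) < w(j+1)`
(`j` is not the last position and is followed by an ascent), or there is a
position `k` strictly between `i` and `j` with `w(j) > w(k)`. -/
def IsAdmissible (w : List ℕ) (i j : ℕ) : Prop :=
  (j + 1 < w.length ∧ w.getD j 0 < w.getD (j + 1) 0) ∨
    ∃ k, i < k ∧ k < j ∧ w.getD k 0 < w.getD j 0

instance (w : List ℕ) (i j : ℕ) : Decidable (IsAdmissible w i j) :=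
  decidable_of_iff ((j + 1 < w.length ∧ w.getD j 0 < w.getD (j + 1) 0) ∨
      ∃ k ∈ Finset.Ioo i j, w.getD k 0 < w.getD j 0) (by
    unfold IsAdmissible
    simp only [Finset.mem_Ioo, and_assoc])

/-- `ai w` is the number of admissible inversions of `w`. -/
def ai (w : List ℕ) : ℕ :=
  ((Finset.range w.length ×ˢ Finset.range w.length).filter
    fun p => p.1 < p.2 ∧ w.getD p.2 0 < w.getD p.1 0 ∧ IsAdmissible w p.1 p.2).card

/-- `aid w = ai w + des w`. -/
def aid (w : List ℕ) : ℕ := ai w + des w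

/-- The statistic `aix`, defined recursively: `aix ∅ = 0`; writing a nonempty
word as `π = α m β`, where `m` is the smallest letter and `α` is the maximal
prefix not containing `m`, one has `aix π = 1 + aix β` if `α = ∅`,
`aix π = 0` if `β = ∅` (and `α ≠ ∅`), and `aix π = aix α` otherwise. -/
def aix : List ℕ → ℕ
  | [] => 0
  | x :: xs =>
    if (x :: xs).takeWhile (fun a => decide (a ≠ xs.foldr min x)) = [] then
      1 + aix (((x :: xs).dropWhile (fun a => decide (a ≠ xs.foldr min x))).tail)
    else if ((x :: xs).dropWhile (fun a => decide (a ≠ xs.foldr min x))).tail = [] then 0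
    else aix ((x :: xs).takeWhile (fun a => decide (a ≠ xs.foldr min x)))
termination_by w => w.length
decreasing_by
  · simp only [List.foldr_subtype, List.unattach_attach]
    have h1 := (List.dropWhile_sublist (l := x :: xs) (fun a => decide (a ≠ xs.foldr min x))).length_le
    have h2 := List.length_tail (l := (x :: xs).dropWhile (fun a => decide (a ≠ xs.foldr min x)))
    simp only [List.length_cons] at *
    omega
  · rename_i hα hβ
    simp only [List.foldr_subtype, List.unattach_attach] at hα hβ ⊢
    have h0 : ((x :: xs).takeWhile (fun a => decide (a ≠ xs.foldr min x))) ++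
        ((x :: xs).dropWhile (fun a => decide (a ≠ xs.foldr min x))) = x :: xs :=
      List.takeWhile_append_dropWhile ..
    have h1 : ((x :: xs).dropWhile (fun a => decide (a ≠ xs.foldr min x))) ≠ [] := by
      intro h
      apply hβ
      rw [h]
      rfl
    have h2 := congrArg List.length h0
    simp only [List.length_append, List.length_cons] at h2
    have h3 : 0 < ((x :: xs).dropWhile (fun a => decide (a ≠ xs.foldr min x))).length :=
      List.length_pos_iff.mpr h1
    simp only [List.length_cons]
    omega

/-- The map `f(k,τ)`: with `m` the smallest letter of `τ` together with `k`
(`k` not occurring in `τ`), and `τ = α m β` with `α` the maximal prefix of `τ`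
avoiding `m`: `f(k,∅) = k`; `f(k,τ) = kτ` if `k = m`; and for `k > m`,
`f(k,τ) = f(k,β) m` if `α = ∅`, `f(k,τ) = k m α` if `β = ∅`, and
`f(k,τ) = f(k,α) m β` otherwise. -/
def fkt (k : ℕ) : List ℕ → List ℕ
  | [] => [k]
  | x :: xs =>
    if k < xs.foldr min x then k :: x :: xs
    else if (x :: xs).takeWhile (fun a => decide (a ≠ xs.foldr min x)) = [] then
      fkt k (((x :: xs).dropWhile (fun a => decide (a ≠ xs.foldr min x))).tail) ++
        [xs.foldr min x]
    else if ((x :: xs).dropWhile (fun a => decide (a ≠ xs.foldr min x))).tail = [] then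
      k :: xs.foldr min x :: ((x :: xs).takeWhile (fun a => decide (a ≠ xs.foldr min x)))
    else
      fkt k ((x :: xs).takeWhile (fun a => decide (a ≠ xs.foldr min x))) ++
        xs.foldr min x :: ((x :: xs).dropWhile (fun a => decide (a ≠ xs.foldr min x))).tail
termination_by w => w.length
decreasing_by
  · simp only [List.foldr_subtype, List.unattach_attach]
    have h1 := (List.dropWhile_sublist (l := x :: xs) (fun a => decide (a ≠ xs.foldr min x))).length_le
    have h2 := List.length_tail (l := (x :: xs).dropWhile (fun a => decide (a ≠ xs.foldr min x)))
    simp only [List.length_cons] at *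
    omega
  · rename_i hk hα hβ
    simp only [List.foldr_subtype, List.unattach_attach] at hk hα hβ ⊢
    have h0 : ((x :: xs).takeWhile (fun a => decide (a ≠ xs.foldr min x))) ++
        ((x :: xs).dropWhile (fun a => decide (a ≠ xs.foldr min x))) = x :: xs :=
      List.takeWhile_append_dropWhile ..
    have h1 : ((x :: xs).dropWhile (fun a => decide (a ≠ xs.foldr min x))) ≠ [] := by
      intro h
      apply hβ
      rw [h]
      rfl
    have h2 := congrArg List.length h0
    simp only [List.length_append, List.length_cons] at h2
    have h3 : 0 < ((x :: xs).dropWhile (fun a => decide (a ≠ xs.foldr min x))).length :=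
      List.length_pos_iff.mpr h1
    simp only [List.length_cons]
    omega

/-- `ini w` is the first letter of `w`. -/
def ini (w : List ℕ) : ℕ := w.headD 0

/-- The word of a permutation `π ∈ S_n`, namely `π(1) π(2) … π(n)`
(with values in `{1, …, n}`). -/
def permList {n : ℕ} (π : Equiv.Perm (Fin n)) : List ℕ :=
  List.ofFn fun i => (π i : ℕ) + 1

/-- The bijection `φ`: `φ(π) = f(π(1), f(π(2), ⋯ f(π(n), ∅) ⋯ ))`. -/
def phiW (w : List ℕ) : List ℕ := w.foldr fkt []

/-- Helper: `decRun l` splits `l` into its maximal weakly decreasing prefix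
and the rest. -/
def decRun : List ℕ → List ℕ × List ℕ
  | [] => ([], [])
  | [x] => ([x], [])
  | x :: y :: rest =>
    if y ≤ x then ((x :: (decRun (y :: rest)).1), (decRun (y :: rest)).2)
    else ([x], y :: rest)

theorem decRun_append : ∀ l : List ℕ, (decRun l).1 ++ (decRun l).2 = l
  | [] => rfl
  | [x] => rfl
  | x :: y :: rest => by
    rw [decRun]
    split
    · simpa using decRun_append (y :: rest)
    · rfl

/-- Helper computing the hook factorization of a word from its reversal: the
rightmost hook of the word starts at its rightmost descent top, i.e. it is
obtained by extending the maximal weakly decreasing prefix of the reversed word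
by one more letter; the process is repeated on what remains, and when no
letters usable for a hook remain the word left over is the increasing part
`π₀`. The result is `(π₀, [π₁, …, π_k])`. -/
def hookRev (r : List ℕ) : List ℕ × List (List ℕ) :=
  match h : (decRun r).2 with
  | [] => (r.reverse, [])
  | z :: rest =>
    ((hookRev rest).1, (hookRev rest).2 ++ [z :: (decRun r).1.reverse])
termination_by r.length
decreasing_by
  have h2 := congrArg List.length (decRun_append r)
  rw [h] at h2
  simp only [List.length_append, List.length_cons] at h2
  omega

/-- The hook factorization `(π₀, [π₁, …, π_k])` of a word
`w = π₀ π₁ ⋯ π_k`, where `π₀` is increasing and each `π_i`, `i ≥ 1`, is a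
hook. -/
def hookSplit (w : List ℕ) : List ℕ × List (List ℕ) := hookRev w.reverse

/-- `pix w` is the length of the initial increasing factor `π₀` in the hook
factorization of `w`. -/
def pix (w : List ℕ) : ℕ := (hookSplit w).1.length

/-- `lec w` is the sum of the numbers of inversions of the hooks in the hook
factorization of `w`. -/
def lec (w : List ℕ) : ℕ := ((hookSplit w).2.map inv).sum

/-- A word `w(1) … w(r)` with `r ≥ 2` is a hook if
`w(1) > w(2) ≤ w(3) ≤ ⋯ ≤ w(r)`. -/
def IsHook (w : List ℕ) : Prop :=
  ∃ a b rest, w = a :: b :: rest ∧ b < a ∧ List.Chain' (· ≤ ·) (b :: rest)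

/-- `w(i)` is a left-to-right maximum of `w` if `w(k) < w(i)` for all `k < i`. -/
def IsLRMax (w : List ℕ) (i : ℕ) : Prop := ∀ k < i, w.getD k 0 < w.getD i 0

instance (w : List ℕ) (i : ℕ) : Decidable (IsLRMax w i) := by
  unfold IsLRMax; infer_instance

/-- `mix w` counts the pairs of positions `i < j` such that either
`w(i) > w(j)` and `w(i)` is a left-to-right maximum, or `w(i) < w(j)` and
there is `k < i` with `w(k) > w(j)`. -/
def mix (w : List ℕ) : ℕ :=
  ((Finset.range w.length ×ˢ Finset.range w.length).filter fun p =>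
    p.1 < p.2 ∧ ((w.getD p.2 0 < w.getD p.1 0 ∧ IsLRMax w p.1) ∨
      (w.getD p.1 0 < w.getD p.2 0 ∧ ∃ k ∈ Finset.range p.1, w.getD p.2 0 < w.getD k 0))).card

/-- `das w` counts the positions `i` such that either `w(i) > w(i+1)` and
`w(i)` is a left-to-right maximum, or `w(i) < w(i+1)` and there is `k < i`
with `w(k) > w(i+1)`. -/
def das (w : List ℕ) : ℕ :=
  ((Finset.range (w.length - 1)).filter fun i =>
    (w.getD (i + 1) 0 < w.getD i 0 ∧ IsLRMax w i) ∨
      (w.getD i 0 < w.getD (i + 1) 0 ∧ ∃ k ∈ Finset.range i, w.getD (i + 1) 0 < w.getD k 0)).card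

/-- The values of the left-to-right maxima of a word, listed in increasing
order (which is also their order of occurrence). -/
def lrMaxima : List ℕ → List ℕ
  | [] => []
  | x :: xs => x :: lrMaxima (xs.filter fun a => decide (x < a))
termination_by l => l.length
decreasing_by
  have := xs.length_filter_le (fun a => decide (x < a))
  simp only [List.length_cons]
  simp only [List.length_unattach]
  exact Nat.lt_succ_of_le ((List.length_filter_le _ xs.attach).trans_eq List.length_attach)

/-- `Bset w m` is the list of entries of `w` that are smaller than `m` and lie
to the right of (the first occurrence of) `m` in `w`. -/
def Bset (w : List ℕ) (m : ℕ) : List ℕ :=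
  ((w.dropWhile fun a => decide (a ≠ m)).tail).filter fun a => decide (a < m)

/-- Helper for `psiS`: replace the letters satisfying `P`, in order, by the
letters of the first list. -/
def replaceSub (P : ℕ → Bool) : List ℕ → List ℕ → List ℕ
  | _, [] => []
  | rs, x :: xs =>
    if P x then rs.headD x :: replaceSub P rs.tail xs else x :: replaceSub P rs xs

/-- `psiS S w` is `ψ_S(w)`: the result of reversing, in place, the subword of
`w` consisting of the entries belonging to `S`. -/
def psiS (S : List ℕ) (w : List ℕ) : List ℕ :=
  replaceSub (fun a => decide (a ∈ S)) ((w.filter fun a => decide (a ∈ S)).reverse) w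

/-- Helper applying the alternating composition
`ψ_{B₁} ∘ ψ_{B₂ ∩ B₁} ∘ ψ_{B₂} ∘ ⋯ ∘ ψ_{B_{k-1}} ∘ ψ_{B_k ∩ B_{k-1}} ∘ ψ_{B_k}`
to `w`, given the list `[B_k, B_{k-1}, …, B₁]`. -/
def psiChain : List (List ℕ) → List ℕ → List ℕ
  | [], w => w
  | [B], w => psiS B w
  | B :: B' :: rest, w => psiChain (B' :: rest) (psiS (B.inter B') (psiS B w))

/-- The Brändén–Claesson bijection `ψ`. -/
def psi (w : List ℕ) : List ℕ :=
  psiChain (((lrMaxima w).map (Bset w)).reverse) w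


/-! ### Auxiliary lemmas -/

lemma decRun_cons_cons (x y : ℕ) (rest : List ℕ) :
    decRun (x :: y :: rest) =
      if y ≤ x then (x :: (decRun (y :: rest)).1, (decRun (y :: rest)).2)
      else ([x], y :: rest) := by
  rw [decRun]

lemma decRun_le (x y : ℕ) (rest : List ℕ) (h : y ≤ x) :
    decRun (x :: y :: rest) = (x :: (decRun (y :: rest)).1, (decRun (y :: rest)).2) := by
  rw [decRun_cons_cons, if_pos h]

lemma decRun_gt (x y : ℕ) (rest : List ℕ) (h : ¬ y ≤ x) :
    decRun (x :: y :: rest) = ([x], y :: rest) := by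
  rw [decRun_cons_cons, if_neg h]

lemma decRun_append_cons : ∀ (r : List ℕ) (z : ℕ) (t s : List ℕ),
    (decRun r).2 = z :: t → decRun (r ++ s) = ((decRun r).1, z :: (t ++ s))
  | [], z, t, s, h => by simp [decRun] at h
  | [x], z, t, s, h => by simp [decRun] at h
  | x :: y :: rest, z, t, s, h => by
    show decRun (x :: y :: (rest ++ s)) = _
    by_cases hyx : y ≤ x
    · rw [decRun_le _ _ _ hyx] at h
      simp only at h
      have ih := decRun_append_cons (y :: rest) z t s h
      simp only [List.cons_append] at ih
      rw [decRun_le _ _ _ hyx, ih, decRun_le _ _ _ hyx]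
    · rw [decRun_gt _ _ _ hyx] at h
      simp only at h
      injection h with h1 h2
      subst h1; subst h2
      rw [decRun_gt _ _ _ hyx, decRun_gt _ _ _ hyx]

lemma decRun_snd_nil_le : ∀ (r : List ℕ) (hne : r ≠ []),
    (decRun r).2 = [] → ∀ a ∈ r, r.getLast hne ≤ a
  | [], hne, _ => absurd rfl hne
  | [x], _, _ => by simp
  | x :: y :: rest, _, h => by
    by_cases hyx : y ≤ x
    · rw [decRun_le _ _ _ hyx] at h
      simp only at h
      have ih := decRun_snd_nil_le (y :: rest) (by simp) h
      intro a ha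
      rw [List.getLast_cons (by simp)]
      rcases List.mem_cons.mp ha with rfl | ha
      · exact le_trans (ih y (by simp)) hyx
      · exact ih a ha
    · rw [decRun_gt _ _ _ hyx] at h
      simp at h

lemma decRun_snd_nil_pairwise : ∀ (r : List ℕ),
    (decRun r).2 = [] → List.Pairwise (fun a b => b ≤ a) r
  | [], _ => List.Pairwise.nil
  | [x], _ => by simp
  | x :: y :: rest, h => by
    by_cases hyx : y ≤ x
    · rw [decRun_le _ _ _ hyx] at h
      simp only at h
      have ih := decRun_snd_nil_pairwise (y :: rest) h
      refine List.Pairwise.cons ?_ ih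
      intro a ha
      rcases List.mem_cons.mp ha with rfl | ha
      · exact hyx
      · exact le_trans (List.rel_of_pairwise_cons ih ha) hyx
    · rw [decRun_gt _ _ _ hyx] at h
      simp at h

lemma decRun_append_le : ∀ (r : List ℕ) (hne : r ≠ []) (a : ℕ),
    (decRun r).2 = [] → a ≤ r.getLast hne → decRun (r ++ [a]) = (r ++ [a], [])
  | [], hne, _, _, _ => absurd rfl hne
  | [x], _, a, _, hle => by
    have hle' : a ≤ x := hle
    show decRun (x :: a :: []) = _
    rw [decRun_le _ _ _ hle']
    rfl
  | x :: y :: rest, _, a, h, hle => by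
    by_cases hyx : y ≤ x
    · rw [decRun_le _ _ _ hyx] at h
      simp only at h
      have hle' : a ≤ (y :: rest).getLast (by simp) := by
        rw [List.getLast_cons (by simp)] at hle; exact hle
      have ih := decRun_append_le (y :: rest) (by simp) a h hle'
      simp only [List.cons_append] at ih
      show decRun (x :: y :: (rest ++ [a])) = (x :: y :: (rest ++ [a]), [])
      rw [decRun_le _ _ _ hyx, ih]
    · rw [decRun_gt _ _ _ hyx] at h
      simp at h

lemma decRun_append_gt : ∀ (r : List ℕ) (hne : r ≠ []) (a : ℕ),
    (decRun r).2 = [] → r.getLast hne < a → decRun (r ++ [a]) = (r, [a])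
  | [], hne, _, _, _ => absurd rfl hne
  | [x], _, a, _, hlt => by
    have hlt' : x < a := hlt
    show decRun (x :: a :: []) = _
    rw [decRun_gt _ _ _ (by omega)]
  | x :: y :: rest, _, a, h, hlt => by
    by_cases hyx : y ≤ x
    · rw [decRun_le _ _ _ hyx] at h
      simp only at h
      have hlt' : (y :: rest).getLast (by simp) < a := by
        rw [List.getLast_cons (by simp)] at hlt; exact hlt
      have ih := decRun_append_gt (y :: rest) (by simp) a h hlt'
      simp only [List.cons_append] at ih
      show decRun (x :: y :: (rest ++ [a])) = (x :: y :: rest, [a])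
      rw [decRun_le _ _ _ hyx, ih]
    · rw [decRun_gt _ _ _ hyx] at h
      simp at h

lemma hookRev_of_snd_nil (r : List ℕ) (h : (decRun r).2 = []) :
    hookRev r = (r.reverse, []) := by
  rw [hookRev.eq_def]
  split
  · rfl
  · rename_i z rest heq
    rw [h] at heq
    exact absurd heq (by simp)

lemma hookRev_of_snd_cons (r : List ℕ) (z : ℕ) (rest : List ℕ)
    (h : (decRun r).2 = z :: rest) :
    hookRev r = ((hookRev rest).1, (hookRev rest).2 ++ [z :: (decRun r).1.reverse]) := by
  rw [hookRev.eq_def]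
  split
  · rename_i heq
    rw [h] at heq
    exact absurd heq (by simp)
  · rename_i z' rest' heq
    rw [h] at heq
    injection heq with h1 h2
    subst h1; subst h2
    rfl

lemma inv_of_pairwise (w : List ℕ) (h : List.Pairwise (· ≤ ·) w) : inv w = 0 := by
  rw [inv, Finset.card_eq_zero, Finset.filter_eq_empty_iff]
  rintro ⟨i, j⟩ hij
  simp only [Finset.mem_product, Finset.mem_range] at hij
  rintro ⟨hlt, hval⟩
  rw [List.pairwise_iff_getElem] at h
  have := h i j hij.1 hij.2 hlt
  rw [List.getD_eq_getElem w 0 hij.1, List.getD_eq_getElem w 0 hij.2] at hval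
  omega

lemma inv_cons_cons (k l : ℕ) (t : List ℕ) (hlk : l < k) (hlt : ∀ a ∈ t, l < a) :
    inv (k :: l :: t) = 1 + inv (k :: t) := by
  classical
  rw [inv, inv]
  set A := ((Finset.range (k :: l :: t).length ×ˢ Finset.range (k :: l :: t).length).filter
    fun p => p.1 < p.2 ∧ (k :: l :: t).getD p.2 0 < (k :: l :: t).getD p.1 0) with hA
  set B := ((Finset.range (k :: t).length ×ˢ Finset.range (k :: t).length).filter
    fun p => p.1 < p.2 ∧ (k :: t).getD p.2 0 < (k :: t).getD p.1 0) with hB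
  have key : A = insert ((0 : ℕ), (1 : ℕ))
      (B.image fun p => ((if p.1 = 0 then 0 else p.1 + 1), p.2 + 1)) := by
    ext ⟨i, j⟩
    simp only [hA, hB, Finset.mem_insert, Finset.mem_image, Finset.mem_filter,
      Finset.mem_product, Finset.mem_range, List.length_cons, Prod.mk.injEq, Prod.exists]
    constructor
    · rintro ⟨⟨hi, hj⟩, hij, hval⟩
      rcases Nat.eq_zero_or_pos i with rfl | hi0
      · rcases Nat.lt_or_ge j 2 with hj2 | hj2
        · left
          omega
        · right
          refine ⟨0, j - 1, ⟨⟨by omega, by omega⟩, by omega, ?_⟩, by simp, by omega⟩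
          have hrw : j = (j - 2) + 1 + 1 := by omega
          rw [hrw] at hval
          have hrw' : j - 1 = (j - 2) + 1 := by omega
          rw [hrw']
          simpa using hval
      · rcases Nat.lt_or_ge i 2 with hi2 | hi2
        · exfalso
          have hi1 : i = 1 := by omega
          subst hi1
          have hj2 : j ≥ 2 := by omega
          have hrw : j = (j - 2) + 1 + 1 := by omega
          rw [hrw] at hval
          simp only [List.getD_cons_succ, List.getD_cons_zero] at hval
          have hmem : t.getD (j - 2) 0 ∈ t := by
            rw [List.getD_eq_getElem t 0 (by omega)]
            exact List.getElem_mem _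
          exact absurd hval (not_lt.mpr (le_of_lt (hlt _ hmem)))
        · right
          refine ⟨i - 1, j - 1, ⟨⟨by omega, by omega⟩, by omega, ?_⟩,
            by rw [if_neg (by omega)]; omega, by omega⟩
          have hrwi : i = (i - 2) + 1 + 1 := by omega
          have hrwj : j = (j - 2) + 1 + 1 := by omega
          have hrwi' : i - 1 = (i - 2) + 1 := by omega
          have hrwj' : j - 1 = (j - 2) + 1 := by omega
          rw [hrwi, hrwj] at hval
          rw [hrwi', hrwj']
          simpa using hval
    · rintro (⟨rfl, rfl⟩ | ⟨a, b, ⟨⟨ha, hb⟩, hab, hval⟩, hea, heb⟩)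
      · exact ⟨⟨by omega, by omega⟩, by omega, by simpa using hlk⟩
      · subst heb
        rcases Nat.eq_zero_or_pos a with rfl | ha0
        · norm_num at hea
          subst hea
          refine ⟨⟨by omega, by omega⟩, by omega, ?_⟩
          have hrw : b = (b - 1) + 1 := by omega
          rw [hrw] at hval
          have hrw' : b - 1 + 1 + 1 = (b - 1) + 1 + 1 := by omega
          rw [hrw]
          simpa using hval
        · rw [if_neg (by omega)] at hea
          subst hea
          refine ⟨⟨by omega, by omega⟩, by omega, ?_⟩
          have hrwa : a = (a - 1) + 1 := by omega
          have hrwb : b = (b - 1) + 1 := by omega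
          rw [hrwa, hrwb] at hval
          rw [hrwa, hrwb]
          simpa using hval
  have hnot : ((0 : ℕ), (1 : ℕ)) ∉
      B.image (fun p : ℕ × ℕ => ((if p.1 = 0 then 0 else p.1 + 1), p.2 + 1)) := by
    intro hmem
    simp only [Finset.mem_image, Finset.mem_filter, Finset.mem_product, Finset.mem_range,
      Prod.mk.injEq, Prod.exists, hB] at hmem
    obtain ⟨a, b, ⟨_, hab, _⟩, _, hb1⟩ := hmem
    omega
  have hinj : Set.InjOn (fun p : ℕ × ℕ => ((if p.1 = 0 then 0 else p.1 + 1), p.2 + 1)) B := by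
    intro p _ q _ hh
    obtain ⟨a, b⟩ := p
    obtain ⟨a', b'⟩ := q
    simp only [Prod.mk.injEq] at hh ⊢
    obtain ⟨h1, h2⟩ := hh
    refine ⟨?_, by omega⟩
    split at h1 <;> split at h1 <;> omega
  rw [key, Finset.card_insert_of_notMem hnot, Finset.card_image_of_injOn hinj]
  omega

lemma lec_key_nil (k l : ℕ) (hkl : k ≠ l) :
    ((hookRev ([l, k])).1 = [] ∧
      ((hookRev ([l, k])).2.map inv).sum = 1 + ((hookRev ([k])).2.map inv).sum)
    ∨ (hookRev ([l, k])).1 ≠ [] := by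
  rcases Nat.lt_or_ge k l with hkl' | hkl'
  · right
    have hd : decRun [l, k] = ([l, k], []) := by
      rw [decRun_le _ _ _ (by omega)]
      rfl
    rw [hookRev_of_snd_nil _ (by rw [hd])]
    simp
  · have hlk : l < k := by omega
    left
    have hd : decRun [l, k] = ([l], [k]) := decRun_gt _ _ _ (by omega)
    have hd1 : decRun [k] = ([k], []) := rfl
    rw [hookRev_of_snd_cons [l, k] k [] (by rw [hd]),
      hookRev_of_snd_nil [] (by rfl), hookRev_of_snd_nil [k] (by rw [hd1])]
    simp only [hd, List.reverse_cons, List.reverse_nil, List.nil_append, List.map_nil,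
      List.map_cons, List.sum_nil, List.map_append, List.sum_cons]
    have h1 : inv [k, l] = 1 + inv [k] := inv_cons_cons k l [] hlk (by simp)
    have h2 : inv [k] = 0 := inv_of_pairwise [k] (by simp)
    refine ⟨by trivial, by omega⟩

lemma lec_key : ∀ (n : ℕ) (r : List ℕ) (k l : ℕ), r.length ≤ n → k ≠ l →
    l ∉ r → k ∉ r →
    ((hookRev (r ++ [l, k])).1 = [] ∧
      ((hookRev (r ++ [l, k])).2.map inv).sum = 1 + ((hookRev (r ++ [k])).2.map inv).sum)
    ∨ (hookRev (r ++ [l, k])).1 ≠ [] := by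
  intro n
  induction n with
  | zero =>
    intro r k l hlen hkl hl hk
    have hr : r = [] := List.length_eq_zero_iff.mp (by omega)
    subst hr
    simpa using lec_key_nil k l hkl
  | succ n ih =>
    intro r k l hlen hkl hl hk
    rcases Nat.eq_zero_or_pos r.length with hr0 | hrpos
    · have hr : r = [] := List.length_eq_zero_iff.mp (by omega)
      subst hr
      simpa using lec_key_nil k l hkl
    have hne : r ≠ [] := by intro h; subst h; simp at hrpos
    rcases hdr : (decRun r).2 with _ | ⟨z, rest⟩
    · -- terminal case: r weakly decreasing
      have hglb := decRun_snd_nil_le r hne hdr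
      set z := r.getLast hne with hz
      have hzmem : z ∈ r := List.getLast_mem hne
      have hfst : (decRun r).1 = r := by
        have := decRun_append r
        rw [hdr, List.append_nil] at this
        exact this
      rcases Nat.lt_or_ge l z with hlz | hlz
      · -- l < z : decreasing run extends over l
        have hd1 : decRun (r ++ [l]) = (r ++ [l], []) :=
          decRun_append_le r hne l hdr (le_of_lt hlz)
        have hlast1 : (r ++ [l]).getLast (by simp) = l := by simp
        rcases Nat.lt_or_ge k l with hkl' | hkl'
        · right
          have hd2 : decRun (r ++ [l] ++ [k]) = (r ++ [l] ++ [k], []) := by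
            apply decRun_append_le (r ++ [l]) (by simp) k (by rw [hd1])
            rw [hlast1]; omega
          have heq0 : r ++ [l, k] = r ++ [l] ++ [k] := by simp
          rw [heq0, hookRev_of_snd_nil _ (by rw [hd2])]
          simp
        · have hlk : l < k := by omega
          left
          have hd2 : decRun (r ++ [l] ++ [k]) = (r ++ [l], [k]) := by
            apply decRun_append_gt (r ++ [l]) (by simp) k (by rw [hd1])
            rw [hlast1]; omega
          have heq0 : r ++ [l, k] = r ++ [l] ++ [k] := by simp
          have hall_l : ∀ a ∈ r, l < a := by
            intro a ha
            exact lt_of_lt_of_le hlz (hglb a ha)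
          rw [heq0, hookRev_of_snd_cons (r ++ [l] ++ [k]) k [] (by rw [hd2]),
            hookRev_of_snd_nil [] (by rfl)]
          rw [hd2]
          simp only [List.reverse_append, List.reverse_cons, List.reverse_nil,
            List.nil_append, List.map_nil, List.sum_nil, List.map_append, List.map_cons,
            List.sum_cons, List.cons_append]
          refine ⟨by trivial, ?_⟩
          have hinv1 : inv (k :: l :: r.reverse) = 1 + inv (k :: r.reverse) := by
            apply inv_cons_cons k l r.reverse hlk
            intro a ha
            exact hall_l a (List.mem_reverse.mp ha)
          rcases Nat.lt_or_ge k z with hkz | hkz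
          · -- k < z : RHS fully decreasing, lec = 0
            have hd4 : decRun (r ++ [k]) = (r ++ [k], []) :=
              decRun_append_le r hne k hdr (le_of_lt hkz)
            rw [hookRev_of_snd_nil _ (by rw [hd4])]
            simp only [List.map_nil, List.sum_nil]
            have hinv2 : inv (k :: r.reverse) = 0 := by
              apply inv_of_pairwise
              refine List.Pairwise.cons ?_ ?_
              · intro a ha
                have := hglb a (List.mem_reverse.mp ha)
                omega
              · rw [List.pairwise_reverse]
                exact decRun_snd_nil_pairwise r hdr
            omega
          · -- k > z
            have hkz' : z < k := by
              rcases Nat.lt_or_ge z k with h | h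
              · exact h
              · exfalso
                have hzk : k = z := by omega
                exact hk (hzk ▸ hzmem)
            have hd4 : decRun (r ++ [k]) = (r, [k]) :=
              decRun_append_gt r hne k hdr hkz'
            rw [hookRev_of_snd_cons (r ++ [k]) k [] (by rw [hd4]),
              hookRev_of_snd_nil [] (by rfl)]
            simp only [hd4, List.reverse_nil, List.nil_append, List.map_nil, List.sum_nil,
              List.map_cons, List.sum_cons]
            omega
      · -- l > z (l ≠ z since l ∉ r)
        have hzl : z < l := by
          rcases Nat.lt_or_ge z l with h | h
          · exact h
          · exfalso
            have hlz' : l = z := by omega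
            exact hl (hlz' ▸ hzmem)
        right
        have hd1 : decRun (r ++ [l]) = (r, [l]) :=
          decRun_append_gt r hne l hdr hzl
        have hd2 : decRun (r ++ [l] ++ [k]) = (r, [l, k]) := by
          have := decRun_append_cons (r ++ [l]) l [] [k] (by rw [hd1])
          rw [hd1] at this
          simpa using this
        have heq0 : r ++ [l, k] = r ++ [l] ++ [k] := by simp
        rw [heq0, hookRev_of_snd_cons (r ++ [l] ++ [k]) l [k] (by rw [hd2]),
          hookRev_of_snd_nil [k] (by rfl)]
        simp
    · -- recursive case
      have hsplit := decRun_append r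
      rw [hdr] at hsplit
      have hrest_sub : ∀ a ∈ rest, a ∈ r := by
        intro a ha
        rw [← hsplit]
        simp [ha]
      have hrest_len : rest.length ≤ n := by
        have := congrArg List.length hsplit
        simp only [List.length_append, List.length_cons] at this
        omega
      have hd2 := decRun_append_cons r z rest [l, k] hdr
      have hd3 := decRun_append_cons r z rest [k] hdr
      rw [hookRev_of_snd_cons (r ++ [l, k]) z (rest ++ [l, k]) (by rw [hd2]),
        hookRev_of_snd_cons (r ++ [k]) z (rest ++ [k]) (by rw [hd3])]
      rcases ih rest k l hrest_len hkl (fun h => hl (hrest_sub l h)) (fun h => hk (hrest_sub k h)) with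
        ⟨h1, h2⟩ | h1
      · left
        refine ⟨h1, ?_⟩
        rw [hd2, hd3]
        simp only [List.map_append, List.sum_append, List.map_cons, List.map_nil,
          List.sum_cons, List.sum_nil]
        omega
      · right
        exact h1

/-- If `τ = lσ` is nonempty with first letter `l`,
`k ∉ τ` and `pix(kτ) = 0`, then `lec(kτ) = 1 + lec(kσ)`. -/
theorem lec_cons_of_pix_cons_eq_zero (k l : ℕ) (σ : List ℕ)
    (hτ : (l :: σ).Nodup) (hk : k ∉ l :: σ) (h0 : pix (k :: l :: σ) = 0) :
    lec (k :: l :: σ) = 1 + lec (k :: σ) := by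
  have hkl : k ≠ l := fun h => hk (h ▸ List.mem_cons_self)
  have hlσ : l ∉ σ := (List.nodup_cons.mp hτ).1
  have hkσ : k ∉ σ := fun h => hk (List.mem_cons_of_mem _ h)
  have hrev1 : (k :: l :: σ).reverse = σ.reverse ++ [l, k] := by simp
  have hrev2 : (k :: σ).reverse = σ.reverse ++ [k] := by simp
  have hmain := lec_key σ.reverse.length σ.reverse k l le_rfl hkl
    (fun h => hlσ (List.mem_reverse.mp h)) (fun h => hkσ (List.mem_reverse.mp h))
  rcases hmain with ⟨_, h2⟩ | h1
  · unfold lec hookSplit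
    rw [hrev1, hrev2]
    exact h2
  · exfalso
    apply h1
    unfold pix hookSplit at h0
    rw [hrev1] at h0
    exact List.length_eq_zero_iff.mp h0

end PaperStats
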